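/- Let N = 2, h₀ = [0,1]ᵀ, h₁ = [cos τ, sin τ]ᵀ with τ ∈ (−π/2, π/2), R = σ₀² h₀h₀ᵀ + σ₁² h₁h₁ᵀ + c₁(h₀h₁ᵀ + h₁h₀ᵀ) + σₙ² I, and R_ε = R + λ_ε h₁h₁ᵀ for λ_ε ≥ 0. Then the RZF beamformer w = R_ε⁻¹h₀ / (h₀ᵀR_ε⁻¹h₀) equals [−cos τ((σ₁²+λ_ε) sin τ + c₁) / ((σ₁²+λ_ε)cos²τ + σₙ²), 1]ᵀ. -/

import Mathlib

open Matrix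

/-- explicit form of the RZF beamformer in the real 2×2 setting. -/
theorem rzf_closed_form_real
    (τ σ02 σ12 σn2 c1 lam : ℝ)
    (hτ : τ ∈ Set.Ioo (-(Real.pi / 2)) (Real.pi / 2))
    (hσ02 : 0 < σ02) (hσ12 : 0 < σ12) (hσn2 : 0 < σn2)
    (hc1 : |c1| ≤ Real.sqrt σ02 * Real.sqrt σ12)
    (hlam : 0 ≤ lam)
    (h0 h1 : Fin 2 → ℝ)
    (hh0 : h0 = ![0, 1]) (hh1 : h1 = ![Real.cos τ, Real.sin τ])
    (R Re : Matrix (Fin 2) (Fin 2) ℝ)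
    (hR : R = σ02 • Matrix.vecMulVec h0 h0 + σ12 • Matrix.vecMulVec h1 h1
            + c1 • (Matrix.vecMulVec h0 h1 + Matrix.vecMulVec h1 h0)
            + σn2 • (1 : Matrix (Fin 2) (Fin 2) ℝ))
    (hRe : Re = R + lam • Matrix.vecMulVec h1 h1) :
    IsUnit Re.det ∧ h0 ⬝ᵥ Re⁻¹.mulVec h0 ≠ 0 ∧
    (h0 ⬝ᵥ Re⁻¹.mulVec h0)⁻¹ • Re⁻¹.mulVec h0
      = ![-(Real.cos τ * ((σ12 + lam) * Real.sin τ + c1))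
            / ((σ12 + lam) * Real.cos τ ^ 2 + σn2), 1] := by
  obtain ⟨hτ1, hτ2⟩ := hτ
  have hc : 0 < Real.cos τ := Real.cos_pos_of_mem_Ioo ⟨hτ1, hτ2⟩
  set c := Real.cos τ with hcdef
  set s := Real.sin τ with hsdef
  have hcs : s ^ 2 + c ^ 2 = 1 := Real.sin_sq_add_cos_sq τ
  have hc1sq : c1 ^ 2 ≤ σ02 * σ12 := by
    nlinarith [sq_abs c1, Real.sq_sqrt hσ02.le, Real.sq_sqrt hσ12.le,
      Real.sqrt_nonneg σ02, Real.sqrt_nonneg σ12, abs_nonneg c1]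
  set A := (σ12 + lam) * c ^ 2 + σn2 with hA
  set B := (σ12 + lam) * c * s + c1 * c with hB
  set D := σ02 + (σ12 + lam) * s ^ 2 + 2 * c1 * s + σn2 with hD
  have hReE : Re = !![A, B; B, D] := by
    subst hRe hR hh0 hh1
    ext i j
    fin_cases i <;> fin_cases j <;>
      simp [Matrix.vecMulVec_apply, Matrix.one_apply, hA, hB, hD] <;> ring
  have hApos : 0 < A := by
    have : 0 ≤ (σ12 + lam) * c ^ 2 := by positivity
    linarith
  have hdet : Re.det = A * D - B * B := by
    rw [hReE, Matrix.det_fin_two_of]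
  have hdetpos : 0 < Re.det := by
    rw [hdet, hA, hB, hD]
    nlinarith [sq_nonneg (c1 + σ12 * s), sq_nonneg (c1 + (σ12 + lam) * s),
      mul_pos hσ12 hσn2, sq_nonneg c, sq_nonneg s, mul_pos hc hc,
      mul_nonneg hlam (sq_nonneg c), mul_nonneg (mul_nonneg hlam hσ02.le) (sq_nonneg c),
      mul_pos (mul_pos hσn2 hc) hc, mul_pos hσn2 hσn2,
      mul_nonneg (mul_nonneg hσn2.le hlam) (sq_nonneg s)]
  have hunit : IsUnit Re.det := isUnit_iff_ne_zero.mpr hdetpos.ne'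
  have hinv : Re⁻¹ = Re.det⁻¹ • !![D, -B; -B, A] := by
    rw [Matrix.inv_def, Ring.inverse_eq_inv', hReE, Matrix.adjugate_fin_two_of]
  have hmv : Re⁻¹.mulVec h0 = Re.det⁻¹ • ![-B, A] := by
    rw [hinv, hh0]
    ext i
    fin_cases i <;> simp [Matrix.mulVec, dotProduct]
  have hdot : h0 ⬝ᵥ Re⁻¹.mulVec h0 = Re.det⁻¹ * A := by
    rw [hmv, hh0]
    simp [dotProduct]
  have hdotne : h0 ⬝ᵥ Re⁻¹.mulVec h0 ≠ 0 := by
    rw [hdot]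
    positivity
  refine ⟨hunit, hdotne, ?_⟩
  rw [hdot, hmv]
  ext i
  have hdne : Re.det ≠ 0 := hdetpos.ne'
  fin_cases i <;>
    simp only [Matrix.smul_cons, Matrix.smul_empty, smul_eq_mul,
      Matrix.cons_val_zero, Matrix.cons_val_one, Matrix.head_cons,
      Pi.smul_apply, Fin.zero_eta, Fin.mk_one]
  · rw [hA, hB]
    field_simp
  · field_simp
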